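/- The Rauzy operation a preserves irreducibility: if π is an irreducible permutation of {1,…,m} (i.e., π({1,…,k}) = {1,…,k} only when k = m), then aπ, defined by aπ(j) = π(j) for j ≤ π⁻¹(m), aπ(j) = π(m) for j = π⁻¹(m)+1, and aπ(j) = π(j−1) otherwise, is also irreducible. -/
import Mathlib


/-- The Rauzy operation `a` preserves irreducibility. Indices are 0-based:
the symbol `m` of the paper corresponds to `Fin.last`, i.e. `⟨m-1, _⟩`. -/
theorem rauzy_a_preserves_irreducible (m : ℕ) (hm : 0 < m)
    (π : Equiv.Perm (Fin m)) (σ : Fin m → Fin m)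
    (p : Fin m) (hp : p = π.symm ⟨m - 1, Nat.sub_lt hm one_pos⟩)
    (h1 : ∀ j : Fin m, (j : ℕ) ≤ (p : ℕ) → σ j = π j)
    (h2 : ∀ j : Fin m, (j : ℕ) = (p : ℕ) + 1 → σ j = π ⟨m - 1, Nat.sub_lt hm one_pos⟩)
    (h3 : ∀ j : Fin m, (p : ℕ) + 1 < (j : ℕ) →
      σ j = π ⟨(j : ℕ) - 1, lt_of_le_of_lt (Nat.sub_le _ _) j.isLt⟩)
    (hirr : ∀ k : ℕ, 0 < k → k < m →
      (⇑π) '' {i : Fin m | (i : ℕ) < k} ≠ {i : Fin m | (i : ℕ) < k}) :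
    Function.Bijective σ ∧
    ∀ k : ℕ, 0 < k → k < m →
      σ '' {i : Fin m | (i : ℕ) < k} ≠ {i : Fin m | (i : ℕ) < k} := by
  have hlast : π p = ⟨m - 1, Nat.sub_lt hm one_pos⟩ := by
    rw [hp]; exact π.apply_symm_apply _
  constructor
  · rw [Fintype.bijective_iff_injective_and_card]
    refine ⟨?_, rfl⟩
    intro i j hij
    rcases (by omega : (i : ℕ) ≤ (p : ℕ) ∨ (i : ℕ) = (p : ℕ) + 1 ∨ (p : ℕ) + 1 < (i : ℕ)) with
      hi | hi | hi <;>
    rcases (by omega : (j : ℕ) ≤ (p : ℕ) ∨ (j : ℕ) = (p : ℕ) + 1 ∨ (p : ℕ) + 1 < (j : ℕ)) with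
      hj | hj | hj
    · rw [h1 i hi, h1 j hj] at hij; exact π.injective hij
    · rw [h1 i hi, h2 j hj] at hij
      have := congrArg Fin.val (π.injective hij)
      simp only at this
      have := j.isLt
      omega
    · rw [h1 i hi, h3 j hj] at hij
      have := congrArg Fin.val (π.injective hij)
      simp only at this
      have := j.isLt
      omega
    · rw [h2 i hi, h1 j hj] at hij
      have := congrArg Fin.val (π.injective hij)
      simp only at this
      have := i.isLt
      omega
    · exact Fin.ext (by omega)
    · rw [h2 i hi, h3 j hj] at hij
      have := congrArg Fin.val (π.injective hij)
      simp only at this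
      have := j.isLt
      omega
    · rw [h3 i hi, h1 j hj] at hij
      have := congrArg Fin.val (π.injective hij)
      simp only at this
      have := i.isLt
      omega
    · rw [h3 i hi, h2 j hj] at hij
      have := congrArg Fin.val (π.injective hij)
      simp only at this
      have := i.isLt
      omega
    · rw [h3 i hi, h3 j hj] at hij
      have := congrArg Fin.val (π.injective hij)
      simp only at this
      exact Fin.ext (by omega)
  · intro k hk hkm heq
    by_cases hpk : (p : ℕ) < k
    · have hmem : σ p ∈ σ '' {i : Fin m | (i : ℕ) < k} :=
        Set.mem_image_of_mem σ (by simpa using hpk)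
      rw [heq] at hmem
      have : (σ p : ℕ) < k := hmem
      rw [h1 p le_rfl, hlast] at this
      simp only at this
      omega
    · refine hirr k hk hkm ((Set.image_congr fun i hi => ?_).trans heq)
      have hik : (i : ℕ) < k := hi
      exact (h1 i (by omega)).symm
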